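/- (Theorem 2, equivalence.) Let k ≥ 1, let a₁, …, a_k and C be nonzero integers, 0 < ε ≤ 1/(4 Σᵢ |aᵢ|), P ≥ 2k/ε², and let f : ℝ^{2k} → ℝ be f(x) = (C - Σ_{i=1}^k aᵢ xᵢ)² + P · Σ_{i=1}^k (1 - xᵢ - x_{i+k})² + Σ_{i=1}^{2k} min(1, xᵢ²/ε²). Then there exists a subset S ⊆ {1, …, k} with Σ_{i∈S} aᵢ = C if and only if there exists x ∈ ℝ^{2k} with f(x) ≤ k. -/

import Mathlib

open BigOperators Finset

/-- The inclusion `{1, …, k} → {1, …, 2k}`, `i ↦ i`. -/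
def lo (k : ℕ) (i : Fin k) : Fin (2 * k) :=
  ⟨i.1, by have := i.2; omega⟩

/-- The shifted inclusion `{1, …, k} → {1, …, 2k}`, `i ↦ i + k`. -/
def hi (k : ℕ) (i : Fin k) : Fin (2 * k) :=
  ⟨i.1 + k, by have := i.2; omega⟩

/-- The objective function of Theorem 2:
`f(x) = (C - Σᵢ aᵢ xᵢ)² + P·Σᵢ (1 - xᵢ - x_{i+k})² + Σᵢ min(1, xᵢ²/ε²)`. -/
noncomputable def ffun (k : ℕ) (a : Fin k → ℤ) (C : ℤ) (P ε : ℝ)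
    (x : Fin (2 * k) → ℝ) : ℝ :=
  ((C : ℝ) - ∑ i : Fin k, (a i : ℝ) * x (lo k i)) ^ 2
    + P * ∑ i : Fin k, (1 - x (lo k i) - x (hi k i)) ^ 2
    + ∑ i : Fin (2 * k), min 1 (x i ^ 2 / ε ^ 2)

lemma sum_split (k : ℕ) (g : Fin (2 * k) → ℝ) :
    ∑ i : Fin (2 * k), g i
      = ∑ i : Fin k, g (lo k i) + ∑ i : Fin k, g (hi k i) := by
  rw [← Equiv.sum_comp ((finSumFinEquiv (m := k) (n := k)).trans (finCongr (two_mul k).symm)) g,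
    Fintype.sum_sum_type]
  congr 1 <;> exact Finset.sum_congr rfl fun i _ => by
    congr 1; apply Fin.ext; simp [lo, hi, finCongr]

set_option maxHeartbeats 1600000 in
/-- Theorem 2, equivalence: a good subset `S` with `Σ_{i∈S} aᵢ = C` exists
if and only if there exists `x ∈ ℝ^{2k}` with `f(x) ≤ k`. -/
theorem goodSubset_iff_exists_ffun_le
    (k : ℕ) (hk : 1 ≤ k) (a : Fin k → ℤ) (C : ℤ)
    (ha : ∀ i, a i ≠ 0) (hC : C ≠ 0) (ε P : ℝ)
    (hε : 0 < ε) (hε' : ε ≤ 1 / (4 * ∑ i, |(a i : ℝ)|)) (hP : 2 * k / ε ^ 2 ≤ P) :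
    (∃ S : Finset (Fin k), ∑ i ∈ S, a i = C)
      ↔ ∃ x : Fin (2 * k) → ℝ, ffun k a C P ε x ≤ k := by
  classical
  have hkR : (1 : ℝ) ≤ k := by exact_mod_cast hk
  have hA1 : (1 : ℝ) ≤ ∑ i, |(a i : ℝ)| := by
    calc (1 : ℝ) ≤ (k : ℝ) := hkR
    _ = ∑ _i : Fin k, (1 : ℝ) := by simp
    _ ≤ ∑ i, |(a i : ℝ)| := by
        apply Finset.sum_le_sum
        intro i _
        have h1 : (1 : ℤ) ≤ |a i| := Int.one_le_abs (ha i)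
        calc (1 : ℝ) ≤ ((|a i| : ℤ) : ℝ) := by exact_mod_cast h1
        _ = |(a i : ℝ)| := by push_cast; ring
  have hε14 : ε ≤ 1 / 4 := by
    refine hε'.trans ?_
    rw [div_le_div_iff₀ (by linarith) (by norm_num)]
    linarith
  have hε2 : (0 : ℝ) < ε ^ 2 := by positivity
  have hε21 : ε ^ 2 ≤ 1 := by nlinarith
  have hP0 : 0 < P := lt_of_lt_of_le (div_pos (by linarith) hε2) hP
  have h2k : 2 * (k : ℝ) ≤ P * ε ^ 2 := by
    rw [div_le_iff₀ hε2] at hP; linarith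
  constructor
  · rintro ⟨S, hS⟩
    refine ⟨fun j => if h : (j : ℕ) < k then (if (⟨j, h⟩ : Fin k) ∈ S then 1 else 0)
      else (if (⟨(j : ℕ) - k, by omega⟩ : Fin k) ∈ S then 0 else 1), ?_⟩
    set x : Fin (2 * k) → ℝ := fun j => if h : (j : ℕ) < k then (if (⟨j, h⟩ : Fin k) ∈ S then 1 else 0)
      else (if (⟨(j : ℕ) - k, by omega⟩ : Fin k) ∈ S then 0 else 1) with hxdef
    have hxlo : ∀ i : Fin k, x (lo k i) = if i ∈ S then 1 else 0 := by
      intro i; simp only [hxdef, lo]; rw [dif_pos i.2]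
    have hxhi : ∀ i : Fin k, x (hi k i) = if i ∈ S then 0 else 1 := by
      intro i; simp only [hxdef, hi]
      rw [dif_neg (by omega)]
      congr 1
      · congr 1; apply Fin.ext; simp
    have hT1 : ∑ i, (a i : ℝ) * x (lo k i) = (C : ℝ) := by
      rw [← hS]
      push_cast
      calc ∑ i, (a i : ℝ) * x (lo k i) = ∑ i, if i ∈ S then (a i : ℝ) else 0 := by
            apply Finset.sum_congr rfl
            intro i _
            rw [hxlo]
            split <;> simp
      _ = ∑ i ∈ S, (a i : ℝ) := by rw [Finset.sum_ite_mem, Finset.univ_inter]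
    have hT2 : ∑ i : Fin k, (1 - x (lo k i) - x (hi k i)) ^ 2 = 0 := by
      apply Finset.sum_eq_zero
      intro i _
      rw [hxlo, hxhi]
      by_cases h : i ∈ S <;> simp [h]
    have hM1 : min (1 : ℝ) ((1 : ℝ) ^ 2 / ε ^ 2) = 1 :=
      min_eq_left (by rw [one_pow, le_div_iff₀ hε2]; linarith)
    have hM0 : min (1 : ℝ) ((0 : ℝ) ^ 2 / ε ^ 2) = 0 := by
      rw [min_eq_right (by norm_num)]
      norm_num
    have hT3 : ∑ i : Fin (2 * k), min 1 (x i ^ 2 / ε ^ 2) = k := by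
      rw [sum_split k (fun j => min 1 (x j ^ 2 / ε ^ 2))]
      have key : ∀ i : Fin k, min 1 (x (lo k i) ^ 2 / ε ^ 2)
          + min 1 (x (hi k i) ^ 2 / ε ^ 2) = 1 := by
        intro i
        rw [hxlo, hxhi]
        by_cases h : i ∈ S
        · rw [if_pos h, if_pos h, hM1, hM0]; norm_num
        · rw [if_neg h, if_neg h, hM1, hM0]; norm_num
      rw [← Finset.sum_add_distrib]
      calc ∑ i : Fin k, (min 1 (x (lo k i) ^ 2 / ε ^ 2) + min 1 (x (hi k i) ^ 2 / ε ^ 2))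
          = ∑ _i : Fin k, (1 : ℝ) := Finset.sum_congr rfl fun i _ => key i
      _ = k := by simp
    rw [ffun, hT1, hT2, hT3]
    simp
  · rintro ⟨x, hx⟩
    have hm0 : ∀ j, (0 : ℝ) ≤ min 1 (x j ^ 2 / ε ^ 2) :=
      fun j => le_min zero_le_one (by positivity)
    have hm1 : ∀ j, ε ≤ |x j| → min (1 : ℝ) (x j ^ 2 / ε ^ 2) = 1 := by
      intro j hj
      apply min_eq_left
      rw [le_div_iff₀ hε2]
      nlinarith [sq_abs (x j), abs_nonneg (x j)]
    have hmz : ∀ j, min (1 : ℝ) (x j ^ 2 / ε ^ 2) = 0 → x j = 0 := by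
      intro j h
      by_contra hne
      have : (0 : ℝ) < min 1 (x j ^ 2 / ε ^ 2) := lt_min one_pos (by positivity)
      linarith
    rw [ffun] at hx
    have hT1nn : 0 ≤ ((C : ℝ) - ∑ i, (a i : ℝ) * x (lo k i)) ^ 2 := sq_nonneg _
    have hT2nn : 0 ≤ ∑ i : Fin k, (1 - x (lo k i) - x (hi k i)) ^ 2 :=
      Finset.sum_nonneg fun i _ => sq_nonneg _
    have hPT2nn : 0 ≤ P * ∑ i : Fin k, (1 - x (lo k i) - x (hi k i)) ^ 2 :=
      mul_nonneg hP0.le hT2nn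
    have hT3nn : 0 ≤ ∑ i : Fin (2 * k), min 1 (x i ^ 2 / ε ^ 2) :=
      Finset.sum_nonneg fun i _ => hm0 i
    have hpair : ∀ i : Fin k, (1 - x (lo k i) - x (hi k i)) ^ 2 ≤ ε ^ 2 / 2 := by
      intro i
      have h1 : (1 - x (lo k i) - x (hi k i)) ^ 2
          ≤ ∑ i : Fin k, (1 - x (lo k i) - x (hi k i)) ^ 2 :=
        Finset.single_le_sum (f := fun j : Fin k => (1 - x (lo k j) - x (hi k j)) ^ 2)
          (fun j _ => sq_nonneg _) (Finset.mem_univ i)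
      have h2 : P * ∑ i : Fin k, (1 - x (lo k i) - x (hi k i)) ^ 2 ≤ k := by linarith
      have h3 : P * (1 - x (lo k i) - x (hi k i)) ^ 2 ≤ (k : ℝ) :=
        le_trans (mul_le_mul_of_nonneg_left h1 hP0.le) h2
      nlinarith [sq_nonneg (1 - x (lo k i) - x (hi k i))]
    have hge : ∀ i : Fin k,
        1 ≤ min 1 (x (lo k i) ^ 2 / ε ^ 2) + min 1 (x (hi k i) ^ 2 / ε ^ 2) := by
      intro i
      have h1 := hpair i
      have hs : 1 - ε ≤ x (lo k i) + x (hi k i) := by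
        nlinarith [sq_nonneg (1 - x (lo k i) - x (hi k i) - ε)]
      rcases le_or_gt (x (lo k i)) (x (hi k i)) with h | h
      · have hε' : ε ≤ |x (hi k i)| := le_trans (by linarith) (le_abs_self _)
        have e1 := hm1 _ hε'
        have e2 := hm0 (lo k i)
        linarith
      · have hε' : ε ≤ |x (lo k i)| := le_trans (by linarith) (le_abs_self _)
        have e1 := hm1 _ hε'
        have e2 := hm0 (hi k i)
        linarith
    have hsplit : ∑ j : Fin (2 * k), min 1 (x j ^ 2 / ε ^ 2)
        = ∑ i : Fin k, (min 1 (x (lo k i) ^ 2 / ε ^ 2) + min 1 (x (hi k i) ^ 2 / ε ^ 2)) := by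
      rw [sum_split k (fun j => min 1 (x j ^ 2 / ε ^ 2)), ← Finset.sum_add_distrib]
    have hT3ge : (k : ℝ) ≤ ∑ j : Fin (2 * k), min 1 (x j ^ 2 / ε ^ 2) := by
      rw [hsplit]
      calc (k : ℝ) = ∑ _i : Fin k, (1 : ℝ) := by simp
      _ ≤ _ := Finset.sum_le_sum fun i _ => hge i
    have hT1z : (C : ℝ) - ∑ i, (a i : ℝ) * x (lo k i) = 0 := by
      have h : ((C : ℝ) - ∑ i, (a i : ℝ) * x (lo k i)) ^ 2 ≤ 0 := by linarith
      exact sq_eq_zero_iff.mp (le_antisymm h hT1nn)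
    have hT2z : ∑ i : Fin k, (1 - x (lo k i) - x (hi k i)) ^ 2 = 0 := by
      have h : P * ∑ i : Fin k, (1 - x (lo k i) - x (hi k i)) ^ 2 ≤ 0 := by linarith
      refine le_antisymm ?_ hT2nn
      by_contra hc
      push_neg at hc
      have := mul_pos hP0 hc
      linarith
    have hT3k : ∑ j : Fin (2 * k), min 1 (x j ^ 2 / ε ^ 2) = (k : ℝ) := by linarith
    have hpair1 : ∀ i : Fin k,
        min 1 (x (lo k i) ^ 2 / ε ^ 2) + min 1 (x (hi k i) ^ 2 / ε ^ 2) = 1 := by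
      have hsum : ∑ i : Fin k, (1 : ℝ)
          = ∑ i : Fin k, (min 1 (x (lo k i) ^ 2 / ε ^ 2) + min 1 (x (hi k i) ^ 2 / ε ^ 2)) := by
        rw [← hsplit, hT3k]; simp
      intro i
      exact ((Finset.sum_eq_sum_iff_of_le fun i _ => hge i).mp hsum i (mem_univ i)).symm
    have hxsum : ∀ i : Fin k, x (lo k i) + x (hi k i) = 1 := by
      intro i
      have h := (Finset.sum_eq_zero_iff_of_nonneg fun i _ => sq_nonneg
        (1 - x (lo k i) - x (hi k i))).mp hT2z i (mem_univ i)
      have := sq_eq_zero_iff.mp h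
      linarith
    have hzo : ∀ i : Fin k, x (lo k i) = 0 ∨ x (lo k i) = 1 := by
      intro i
      have hs := hxsum i
      have hp := hpair1 i
      rcases le_or_gt (x (lo k i)) (x (hi k i)) with h | h
      · have hε' : ε ≤ |x (hi k i)| := le_trans (by linarith) (le_abs_self _)
        have h1 := hm1 _ hε'
        have h0 : min 1 (x (lo k i) ^ 2 / ε ^ 2) = 0 := by linarith [hm0 (lo k i)]
        exact Or.inl (hmz _ h0)
      · have hε' : ε ≤ |x (lo k i)| := le_trans (by linarith) (le_abs_self _)
        have h1 := hm1 _ hε'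
        have h0 : min 1 (x (hi k i) ^ 2 / ε ^ 2) = 0 := by linarith [hm0 (hi k i)]
        have := hmz _ h0
        exact Or.inr (by linarith)
    have hCsum : (C : ℝ) = ∑ i, (a i : ℝ) * x (lo k i) := by linarith
    refine ⟨Finset.univ.filter (fun i => x (lo k i) = 1), ?_⟩
    have key : ((∑ i ∈ Finset.univ.filter (fun i => x (lo k i) = 1), a i : ℤ) : ℝ)
        = (C : ℝ) := by
      push_cast
      rw [Finset.sum_filter, hCsum]
      apply Finset.sum_congr rfl
      intro i _
      rcases hzo i with h | h <;> simp [h]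
    exact_mod_cast key
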